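/- Let n ≥ 3 be an integer, D > 0, and let f : [0,D] → ℝ be twice continuously differentiable with f(0) = 0, f(D) = 0, f'(0) = 1, f'(D) = −1, and f(s) > 0 for all s ∈ (0,D). If for every s ∈ (0,D) one has (n−1)(n−2)·(1−f'(s)²)/f(s)² − 2(n−1)·f''(s)/f(s) ≥ 0, then |f'(s)| ≤ 1 for every s ∈ [0,D]. -/
import Mathlib


/-- Lemma "ScalarLipschitz": nonnegative scalar curvature of a rotationally symmetric
metric `g = ds² + f(s)² g_round` forces the warping function to be 1-Lipschitz. -/
theorem scalar_lipschitz (n : ℕ) (hn : 3 ≤ n) (D : ℝ) (hD : 0 < D)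
    (f f' f'' : ℝ → ℝ)
    (hderiv1 : ∀ s ∈ Set.Icc (0 : ℝ) D, HasDerivWithinAt f (f' s) (Set.Icc (0 : ℝ) D) s)
    (hderiv2 : ∀ s ∈ Set.Icc (0 : ℝ) D, HasDerivWithinAt f' (f'' s) (Set.Icc (0 : ℝ) D) s)
    (hcont : ContinuousOn f'' (Set.Icc (0 : ℝ) D))
    (hf0 : f 0 = 0) (hfD : f D = 0) (hf'0 : f' 0 = 1) (hf'D : f' D = -1)
    (hpos : ∀ s ∈ Set.Ioo (0 : ℝ) D, 0 < f s)
    (hscal : ∀ s ∈ Set.Ioo (0 : ℝ) D,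
      0 ≤ ((n : ℝ) - 1) * ((n : ℝ) - 2) * (1 - (f' s) ^ 2) / (f s) ^ 2
          - 2 * ((n : ℝ) - 1) * (f'' s) / (f s)) :
    ∀ s ∈ Set.Icc (0 : ℝ) D, |f' s| ≤ 1 := by
  have hf'cont : ContinuousOn f' (Set.Icc 0 D) :=
    fun s hs => (hderiv2 s hs).continuousWithinAt
  have hne : (Set.Icc (0:ℝ) D).Nonempty := ⟨0, by constructor <;> linarith⟩
  -- key: interior point where f'' vanishes has (f')² ≤ 1
  have key : ∀ s ∈ Set.Ioo (0:ℝ) D, f'' s = 0 → (f' s)^2 ≤ 1 := by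
    intro s hs h0
    by_contra h
    push_neg at h
    have hposf := hpos s hs
    have hsc := hscal s hs
    rw [h0] at hsc
    have hn3 : (3:ℝ) ≤ (n:ℝ) := by exact_mod_cast hn
    have hf2 : 0 < (f s)^2 := by positivity
    have hnum : ((n:ℝ)-1)*((n:ℝ)-2)*(1 - (f' s)^2) < 0 :=
      mul_neg_of_pos_of_neg (by nlinarith) (by linarith)
    have hA : ((n:ℝ)-1)*((n:ℝ)-2)*(1 - (f' s)^2)/(f s)^2 < 0 :=
      div_neg_of_neg_of_pos hnum hf2
    have : 2 * ((n:ℝ)-1) * (0:ℝ) / (f s) = 0 := by ring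
    rw [this] at hsc
    linarith
  -- at interior points, actual derivatives
  have hDA : ∀ s ∈ Set.Ioo (0:ℝ) D, HasDerivAt f' (f'' s) s := by
    intro s hs
    exact (hderiv2 s (Set.Ioo_subset_Icc_self hs)).hasDerivAt
      (Icc_mem_nhds hs.1 hs.2)
  -- upper bound
  obtain ⟨sM, hsM, hmax⟩ := isCompact_Icc.exists_isMaxOn hne hf'cont
  have hub : ∀ s ∈ Set.Icc (0:ℝ) D, f' s ≤ 1 := by
    intro s hs
    by_contra hc
    push_neg at hc
    have hM1 : 1 < f' sM := lt_of_lt_of_le hc (hmax hs)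
    have hsMi : sM ∈ Set.Ioo (0:ℝ) D := by
      rcases hsM with ⟨h0, hDle⟩
      rcases h0.lt_or_eq with h0' | h0'
      · rcases hDle.lt_or_eq with hD' | hD'
        · exact ⟨h0', hD'⟩
        · exfalso; rw [hD'] at hM1; rw [hf'D] at hM1; linarith
      · exfalso; rw [← h0'] at hM1; rw [hf'0] at hM1; linarith
    have hloc : IsLocalMax f' sM := hmax.isLocalMax (Icc_mem_nhds hsMi.1 hsMi.2)
    have h0 : f'' sM = 0 := hloc.hasDerivAt_eq_zero (hDA sM hsMi)
    have := key sM hsMi h0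
    nlinarith
  -- lower bound
  obtain ⟨sm, hsm, hmin⟩ := isCompact_Icc.exists_isMinOn hne hf'cont
  have hlb : ∀ s ∈ Set.Icc (0:ℝ) D, -1 ≤ f' s := by
    intro s hs
    by_contra hc
    push_neg at hc
    have hm1 : f' sm < -1 := lt_of_le_of_lt (hmin hs) hc
    have hsmi : sm ∈ Set.Ioo (0:ℝ) D := by
      rcases hsm with ⟨h0, hDle⟩
      rcases h0.lt_or_eq with h0' | h0'
      · rcases hDle.lt_or_eq with hD' | hD'
        · exact ⟨h0', hD'⟩
        · exfalso; rw [hD'] at hm1; rw [hf'D] at hm1; linarith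
      · exfalso; rw [← h0'] at hm1; rw [hf'0] at hm1; linarith
    have hloc : IsLocalMin f' sm := hmin.isLocalMin (Icc_mem_nhds hsmi.1 hsmi.2)
    have h0 : f'' sm = 0 := hloc.hasDerivAt_eq_zero (hDA sm hsmi)
    have := key sm hsmi h0
    nlinarith
  intro s hs
  rw [abs_le]
  exact ⟨hlb s hs, hub s hs⟩
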